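/- Let W be a finite Weyl group of a crystallographic root system Φ and β, γ ∈ Φ⁺ with ⟨β,γ⟩ = 0 (orthogonal roots). Then the indicator random variables X_β and X_γ (of the events w(β) ∈ Φ⁻ and w(γ) ∈ Φ⁻ for w uniform in W) are independent. -/

import Mathlib

open scoped Classical

noncomputable section

/-- A finite, reduced, crystallographic root system spanning `ℝⁿ`,
together with a choice of positive system. -/
structure CrystRootSystem (n : ℕ) where
  /-- the finite set of roots -/
  roots : Finset (EuclideanSpace ℝ (Fin n))
  nonzero : ∀ β ∈ roots, β ≠ 0
  neg_mem : ∀ β ∈ roots, -β ∈ roots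
  spanning : Submodule.span ℝ (roots : Set (EuclideanSpace ℝ (Fin n))) = ⊤
  reflect_mem : ∀ α ∈ roots, ∀ β ∈ roots,
    β - (2 * (inner ℝ α β : ℝ) / (inner ℝ α α : ℝ)) • α ∈ roots
  cryst : ∀ α ∈ roots, ∀ β ∈ roots, ∃ k : ℤ,
    2 * (inner ℝ α β : ℝ) / (inner ℝ α α : ℝ) = (k : ℝ)
  reduced : ∀ α ∈ roots, ∀ c : ℝ, c • α ∈ roots → c = 1 ∨ c = -1
  /-- the positive roots -/
  pos : Finset (EuclideanSpace ℝ (Fin n))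
  pos_def : ∃ f : EuclideanSpace ℝ (Fin n) →ₗ[ℝ] ℝ, (∀ β ∈ roots, f β ≠ 0) ∧
    ∀ β, β ∈ pos ↔ β ∈ roots ∧ 0 < f β

variable {n : ℕ}

/-- `w` is the orthogonal reflection in the root `β`. -/
def IsReflectionIn (β : EuclideanSpace ℝ (Fin n))
    (w : EuclideanSpace ℝ (Fin n) ≃ₗᵢ[ℝ] EuclideanSpace ℝ (Fin n)) : Prop :=
  ∀ v, w v = v - (2 * (inner ℝ β v : ℝ) / (inner ℝ β β : ℝ)) • β

/-- The Weyl group, generated by the reflections in the roots. -/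
def CrystRootSystem.weyl (R : CrystRootSystem n) :
    Subgroup (EuclideanSpace ℝ (Fin n) ≃ₗᵢ[ℝ] EuclideanSpace ℝ (Fin n)) :=
  Subgroup.closure {w | ∃ β ∈ R.roots, IsReflectionIn β w}

/-- The simple roots: indecomposable positive roots. -/
def CrystRootSystem.simples (R : CrystRootSystem n) : Finset (EuclideanSpace ℝ (Fin n)) :=
  R.pos.filter fun β => ¬ ∃ γ ∈ R.pos, ∃ δ ∈ R.pos, β = γ + δ

/-- The parabolic subgroup generated by the reflections in the roots of `Γ`. -/
def parabolicSubgroup (Γ : Finset (EuclideanSpace ℝ (Fin n))) :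
    Subgroup (EuclideanSpace ℝ (Fin n) ≃ₗᵢ[ℝ] EuclideanSpace ℝ (Fin n)) :=
  Subgroup.closure {w | ∃ α ∈ Γ, IsReflectionIn α w}

/- ### Auxiliary lemmas -/

lemma exists_isReflectionIn (β : EuclideanSpace ℝ (Fin n)) (_hβ : β ≠ 0) :
    ∃ w, IsReflectionIn β w := by
  refine ⟨Submodule.reflection (ℝ ∙ β)ᗮ, fun v => ?_⟩
  rw [Submodule.reflection_apply, Submodule.starProjection_orthogonal_val, Submodule.starProjection_singleton,
    real_inner_self_eq_norm_sq]
  have h2 : 2 * (inner ℝ β v : ℝ) / ‖β‖ ^ 2 = 2 * ((inner ℝ β v : ℝ) / ‖β‖ ^ 2) := by ring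
  rw [h2, two_smul]
  simp only [RCLike.ofReal_real_eq_id, id_eq]
  module

lemma IsReflectionIn.apply_self {β : EuclideanSpace ℝ (Fin n)} (hβ : β ≠ 0)
    {w} (h : IsReflectionIn β w) : w β = -β := by
  have hc : (inner ℝ β β : ℝ) ≠ 0 := inner_self_ne_zero.mpr hβ
  rw [h β, mul_div_assoc, div_self hc, mul_one]
  module

lemma IsReflectionIn.apply_orth {β v : EuclideanSpace ℝ (Fin n)}
    {w} (h : IsReflectionIn β w) (hv : (inner ℝ β v : ℝ) = 0) : w v = v := by
  rw [h v, hv]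
  simp

lemma IsReflectionIn.sq {β : EuclideanSpace ℝ (Fin n)} (hβ : β ≠ 0)
    {w} (h : IsReflectionIn β w) : w * w = 1 := by
  have hc : (inner ℝ β β : ℝ) ≠ 0 := inner_self_ne_zero.mpr hβ
  ext v
  rw [LinearIsometryEquiv.coe_mul, Function.comp_apply, LinearIsometryEquiv.coe_one, id_eq]
  have hwv : (inner ℝ β (w v) : ℝ) = -(inner ℝ β v : ℝ) := by
    rw [h v, inner_sub_right, real_inner_smul_right, real_inner_self_eq_norm_sq]
    rw [real_inner_self_eq_norm_sq] at hc
    field_simp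
    ring
  rw [h (w v), hwv, h v]
  have hx : 2 * -(inner ℝ β v : ℝ) / (inner ℝ β β : ℝ) = -(2 * (inner ℝ β v : ℝ) / (inner ℝ β β : ℝ)) := by
    ring
  rw [hx, neg_smul, sub_neg_eq_add, sub_add_cancel]

lemma IsReflectionIn.inv_eq {β : EuclideanSpace ℝ (Fin n)} (hβ : β ≠ 0)
    {w} (h : IsReflectionIn β w) : w⁻¹ = w :=
  inv_eq_of_mul_eq_one_right (h.sq hβ)

lemma weyl_maps_roots (R : CrystRootSystem n)
    {w : EuclideanSpace ℝ (Fin n) ≃ₗᵢ[ℝ] EuclideanSpace ℝ (Fin n)} (hw : w ∈ R.weyl) :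
    ∀ α ∈ R.roots, w α ∈ R.roots := by
  have key : ∀ w', w' ∈ R.weyl →
      ((∀ α ∈ R.roots, w' α ∈ R.roots) ∧ (∀ α ∈ R.roots, w'⁻¹ α ∈ R.roots)) := by
    intro w' hw'
    refine Subgroup.closure_induction
      (p := fun x _ => (∀ α ∈ R.roots, x α ∈ R.roots) ∧ (∀ α ∈ R.roots, x⁻¹ α ∈ R.roots))
      ?_ ?_ ?_ ?_ hw'
    · rintro x ⟨δ, hδ, hx⟩
      have hx' : ∀ α ∈ R.roots, x α ∈ R.roots := fun α hα => by
        rw [hx α]; exact R.reflect_mem δ hδ α hα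
      exact ⟨hx', by rw [hx.inv_eq (R.nonzero δ hδ)]; exact hx'⟩
    · simp
    · rintro x y hx hy ⟨hx1, hx2⟩ ⟨hy1, hy2⟩
      constructor
      · intro α hα
        rw [LinearIsometryEquiv.coe_mul, Function.comp_apply]
        exact hx1 _ (hy1 _ hα)
      · intro α hα
        rw [mul_inv_rev, LinearIsometryEquiv.coe_mul, Function.comp_apply]
        exact hy2 _ (hx2 _ hα)
    · rintro x hx ⟨h1, h2⟩
      exact ⟨h2, by simpa using h1⟩
  exact (key w hw).1

lemma natCard_split {α : Type*} [Finite α] (p q : α → Prop) :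
    Nat.card {x // p x} = Nat.card {x // p x ∧ q x} + Nat.card {x // p x ∧ ¬ q x} := by
  rw [← Nat.card_congr (Equiv.subtypeSubtypeEquivSubtypeInter p q),
      ← Nat.card_congr (Equiv.subtypeSubtypeEquivSubtypeInter p fun x => ¬ q x),
      ← Nat.card_sum]
  exact Nat.card_congr (Equiv.sumCompl fun y : Subtype p => q y.1).symm

lemma natCard_total {α : Type*} [Finite α] (p : α → Prop) :
    Nat.card α = Nat.card {x // p x} + Nat.card {x // ¬ p x} := by
  rw [← Nat.card_sum]
  exact Nat.card_congr (Equiv.sumCompl p).symm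

/-- For orthogonal positive roots `β, γ`, the indicator random variables
`X_β, X_γ` of the events `w(β) ∈ Φ⁻` and `w(γ) ∈ Φ⁻` (for `w` uniform in the
Weyl group) are independent. -/
theorem orthogonal_roots_independent (R : CrystRootSystem n)
    (β γ : EuclideanSpace ℝ (Fin n)) (hβ : β ∈ R.pos) (hγ : γ ∈ R.pos)
    (horth : (inner ℝ β γ : ℝ) = 0) :
    (Nat.card {w : R.weyl // -(w.1 β) ∈ R.pos ∧ -(w.1 γ) ∈ R.pos} : ℚ) /
        (Nat.card R.weyl : ℚ) =
      (Nat.card {w : R.weyl // -(w.1 β) ∈ R.pos} : ℚ) / (Nat.card R.weyl : ℚ) *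
        ((Nat.card {w : R.weyl // -(w.1 γ) ∈ R.pos} : ℚ) / (Nat.card R.weyl : ℚ)) := by
  by_cases hN : Nat.card R.weyl = 0
  · rw [hN]; simp
  have : Finite R.weyl := Nat.finite_of_card_ne_zero hN
  obtain ⟨f, hf, hpos⟩ := R.pos_def
  have hβr : β ∈ R.roots := ((hpos β).mp hβ).1
  have hγr : γ ∈ R.roots := ((hpos γ).mp hγ).1
  have hβ0 := R.nonzero β hβr
  have hγ0 := R.nonzero γ hγr
  -- dichotomy
  have dich : ∀ α ∈ R.roots, (-α ∈ R.pos ↔ ¬ α ∈ R.pos) := by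
    intro α hα
    constructor
    · rintro h1 h2
      have hp1 := ((hpos _).mp h1).2
      have hp2 := ((hpos _).mp h2).2
      rw [map_neg] at hp1
      linarith
    · intro h
      refine (hpos _).mpr ⟨R.neg_mem α hα, ?_⟩
      rw [map_neg]
      rcases (hf α hα).lt_or_gt with h' | h'
      · linarith
      · exact absurd ((hpos α).mpr ⟨hα, h'⟩) h
  -- reflections
  obtain ⟨sβ, hsβ⟩ := exists_isReflectionIn β hβ0
  obtain ⟨sγ, hsγ⟩ := exists_isReflectionIn γ hγ0
  have hsβW : sβ ∈ R.weyl := Subgroup.subset_closure ⟨β, hβr, hsβ⟩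
  have hsγW : sγ ∈ R.weyl := Subgroup.subset_closure ⟨γ, hγr, hsγ⟩
  have hsββ : sβ β = -β := hsβ.apply_self hβ0
  have hsβγ : sβ γ = γ := hsβ.apply_orth horth
  have hsγγ : sγ γ = -γ := hsγ.apply_self hγ0
  have hsγβ : sγ β = β := hsγ.apply_orth (by rw [real_inner_comm]; exact horth)
  set A : R.weyl → Prop := fun w => -(w.1 β) ∈ R.pos with hA
  set B : R.weyl → Prop := fun w => -(w.1 γ) ∈ R.pos with hB
  -- the two equivalences
  set e1 : R.weyl ≃ R.weyl := Equiv.mulRight (⟨sβ, hsβW⟩ : R.weyl) with he1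
  set e2 : R.weyl ≃ R.weyl := Equiv.mulRight (⟨sγ, hsγW⟩ : R.weyl) with he2
  have he1β : ∀ w : R.weyl, (e1 w).1 β = -(w.1 β) := by
    intro w
    show (w.1 * sβ) β = -(w.1 β)
    rw [LinearIsometryEquiv.coe_mul, Function.comp_apply, hsββ, map_neg]
  have he1γ : ∀ w : R.weyl, (e1 w).1 γ = w.1 γ := by
    intro w
    show (w.1 * sβ) γ = w.1 γ
    rw [LinearIsometryEquiv.coe_mul, Function.comp_apply, hsβγ]
  have he2γ : ∀ w : R.weyl, (e2 w).1 γ = -(w.1 γ) := by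
    intro w
    show (w.1 * sγ) γ = -(w.1 γ)
    rw [LinearIsometryEquiv.coe_mul, Function.comp_apply, hsγγ, map_neg]
  have he2β : ∀ w : R.weyl, (e2 w).1 β = w.1 β := by
    intro w
    show (w.1 * sγ) β = w.1 β
    rw [LinearIsometryEquiv.coe_mul, Function.comp_apply, hsγβ]
  have hAe1 : ∀ w, A (e1 w) ↔ ¬ A w := by
    intro w
    have hr : w.1 β ∈ R.roots := weyl_maps_roots R w.2 β hβr
    rw [hA]
    simp only [he1β w, neg_neg]
    have := dich _ hr
    tauto
  have hBe1 : ∀ w, B (e1 w) ↔ B w := by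
    intro w; rw [hB]; simp only [he1γ w]
  have hBe2 : ∀ w, B (e2 w) ↔ ¬ B w := by
    intro w
    have hr : w.1 γ ∈ R.roots := weyl_maps_roots R w.2 γ hγr
    rw [hB]
    simp only [he2γ w, neg_neg]
    have := dich _ hr
    tauto
  have hAe2 : ∀ w, A (e2 w) ↔ A w := by
    intro w; rw [hA]; simp only [he2β w]
  -- counting
  set a := Nat.card {w : R.weyl // A w ∧ B w} with ha
  have c1 : Nat.card {w : R.weyl // ¬ A w ∧ B w} = a := by
    rw [ha]
    exact Nat.card_congr (Equiv.subtypeEquiv (q := fun w => A w ∧ B w) e1 fun w =>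
      (and_congr (hAe1 w) (hBe1 w)).symm)
  have c2 : Nat.card {w : R.weyl // A w ∧ ¬ B w} = a := by
    rw [ha]
    exact Nat.card_congr (Equiv.subtypeEquiv (q := fun w => A w ∧ B w) e2 fun w =>
      (and_congr (hAe2 w) (hBe2 w)).symm)
  have c3 : Nat.card {w : R.weyl // ¬ A w ∧ ¬ B w} = a := by
    rw [← c1]
    exact Nat.card_congr (Equiv.subtypeEquiv (q := fun w => ¬ A w ∧ B w) e2 fun w =>
      (and_congr (hAe2 w).not (hBe2 w)).symm)
  have cA : Nat.card {w : R.weyl // A w} = a + a := by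
    rw [natCard_split A B, c2, ha]
  have cnA : Nat.card {w : R.weyl // ¬ A w} = a + a := by
    rw [natCard_split (fun w => ¬ A w) B, c1, c3]
  have cB : Nat.card {w : R.weyl // B w} = a + a := by
    rw [natCard_split B A,
      Nat.card_congr (Equiv.subtypeEquivRight fun w : R.weyl => and_comm (a := B w) (b := A w)),
      Nat.card_congr (Equiv.subtypeEquivRight fun w : R.weyl =>
        and_comm (a := B w) (b := ¬ A w)), c1, ha]
  have cW : Nat.card R.weyl = 4 * a := by
    rw [natCard_total A, cA, cnA]; ring
  have ha0 : a ≠ 0 := by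
    intro h; rw [h, mul_zero] at cW; exact hN cW
  show (a : ℚ) / _ = (Nat.card {w : R.weyl // A w} : ℚ) / _ *
    ((Nat.card {w : R.weyl // B w} : ℚ) / _)
  rw [cW, cA, cB]
  have haQ : (a : ℚ) ≠ 0 := Nat.cast_ne_zero.mpr ha0
  push_cast
  field_simp
  ring

end
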